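/- Let N ≥ 2 be an integer and R > 0. There exists a constant C ≥ 0 such that for all real numbers η_1, …, η_N with |η_k| ≤ R for every k, one has |f(1 − Σ_{k=1}^N η_k) − Σ_{k=1}^N f(1 − η_k)| ≤ C (S^{2,N} + B^N)(|η_1|, …, |η_N|). -/

import Mathlib

open Real

-- key two-variable lemma
theorem keylem (f : ℝ → ℝ) (hf1 : f 1 = 0) (L M : ℝ) (hL : 0 < L)
    (hd : Differentiable ℝ f) (hd2 : Differentiable ℝ (deriv f))
    (hM : ∀ x ∈ Set.Icc (1 - 2*L) (1 + 2*L), |deriv (deriv f) x| ≤ M)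
    (a b : ℝ) (ha : |a| ≤ L) (hb : |b| ≤ L) :
    |f (1 - a - b) - f (1 - a) - f (1 - b)| ≤ M * (|a| * |b|) := by
  set I : Set ℝ := Set.Icc (1 - 2*L) (1 + 2*L) with hI
  have hIconv : Convex ℝ I := convex_Icc _ _
  have hlip : ∀ x ∈ I, ∀ y ∈ I, |deriv f y - deriv f x| ≤ M * |y - x| := by
    intro x hx y hy
    have := hIconv.norm_image_sub_le_of_norm_deriv_le
      (f := deriv f) (fun z _ => hd2 z) (fun z hz => hM z hz) hx hy
    simpa using this
  set φ : ℝ → ℝ := fun t => f (1 - a - t) - f (1 - t) with hφ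
  have hmem : ∀ t ∈ Set.uIcc 0 b, (1 - a - t) ∈ I ∧ (1 - t) ∈ I := by
    intro t ht
    have ht' : |t| ≤ |b| := by
      rw [Set.uIcc_eq_union] at ht
      rcases ht with h | h <;> rw [abs_le] <;>
        constructor <;> nlinarith [h.1, h.2, abs_nonneg b, le_abs_self b, neg_abs_le b]
    have h1 : |t| ≤ L := ht'.trans hb
    constructor <;> rw [hI] <;> constructor <;>
      nlinarith [abs_le.mp ha, abs_le.mp h1]
  have hder : ∀ t ∈ Set.uIcc 0 b,
      HasDerivWithinAt φ ((fun t => -(deriv f (1 - a - t)) + deriv f (1 - t)) t) (Set.uIcc 0 b) t := by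
    intro t ht
    have h1 : HasDerivAt (fun t : ℝ => f (1 - a - t)) (deriv f (1 - a - t) * (-1)) t := by
      have := (hd (1 - a - t)).hasDerivAt.comp t
        (by simpa using ((hasDerivAt_id t).const_sub (1 - a)) :
          HasDerivAt (fun t : ℝ => 1 - a - t) (-1) t)
      exact this
    have h2 : HasDerivAt (fun t : ℝ => f (1 - t)) (deriv f (1 - t) * (-1)) t := by
      have := (hd (1 - t)).hasDerivAt.comp t
        (by simpa using ((hasDerivAt_id t).const_sub 1) :
          HasDerivAt (fun t : ℝ => 1 - t) (-1) t)
      exact this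
    have := (h1.sub h2).hasDerivWithinAt (s := Set.uIcc 0 b)
    refine this.congr_deriv ?_
    ring
  have hbnd : ∀ t ∈ Set.uIcc 0 b,
      ‖(fun t => -(deriv f (1 - a - t)) + deriv f (1 - t)) t‖ ≤ M * |a| := by
    intro t ht
    obtain ⟨h1, h2⟩ := hmem t ht
    have h3 := hlip _ h1 _ h2
    have he : (1 : ℝ) - t - (1 - a - t) = a := by ring
    rw [he] at h3
    calc ‖-(deriv f (1 - a - t)) + deriv f (1 - t)‖
        = |deriv f (1 - t) - deriv f (1 - a - t)| := by rw [Real.norm_eq_abs]; ring_nf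
      _ ≤ M * |a| := h3
  have key := (convex_uIcc 0 b).norm_image_sub_le_of_norm_hasDerivWithin_le hder hbnd
    Set.left_mem_uIcc Set.right_mem_uIcc
  have heq : φ b - φ 0 = f (1 - a - b) - f (1 - a) - f (1 - b) := by
    simp only [hφ, sub_zero, hf1]; ring
  rw [heq] at key
  calc |f (1 - a - b) - f (1 - a) - f (1 - b)| ≤ M * |a| * ‖b - 0‖ := key
    _ = M * (|a| * |b|) := by rw [sub_zero, Real.norm_eq_abs]; ring

/-- Expansion of `f(1 - Ση_k) - Σf(1 - η_k)` in terms of `S^{2,N}` and `B^N`. -/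
theorem stmt_8 (f : ℝ → ℝ) (hf : ContDiff ℝ 3 f) (hf1 : f 1 = 0)
    (N : ℕ) (hN : 2 ≤ N) (R : ℝ) (hR : 0 < R) :
    ∃ C : ℝ, 0 ≤ C ∧ ∀ η : Fin N → ℝ, (∀ k, |η k| ≤ R) →
      |f (1 - ∑ k, η k) - ∑ k, f (1 - η k)| ≤
        C * ((∑ i : Fin N, ∑ j : Fin N, if i < j then |η i| * |η j| else 0)
          + (∑ i : Fin N, ∑ j : Fin N, if j ≠ i then |η i| ^ 2 * |η j| else 0)) := by
  -- differentiability facts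
  have h2 : ContDiff ℝ 2 (deriv f) :=
    (contDiff_succ_iff_deriv.mp (show ContDiff ℝ (2+1) f by norm_num; exact hf)).2.2
  have h1 : ContDiff ℝ 1 (deriv (deriv f)) :=
    (contDiff_succ_iff_deriv.mp (show ContDiff ℝ (1+1) (deriv f) by norm_num; exact h2)).2.2
  have hd : Differentiable ℝ f := hf.differentiable (by norm_num)
  have hd2 : Differentiable ℝ (deriv f) := h2.differentiable (by norm_num)
  set L : ℝ := N * R with hLdef
  have hL : 0 < L := by positivity
  -- bound on second derivative on compact interval
  obtain ⟨M, hM⟩ : ∃ M : ℝ, ∀ x ∈ Set.Icc (1 - 2*L) (1 + 2*L), |deriv (deriv f) x| ≤ M := by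
    obtain ⟨M, hM⟩ := (isCompact_Icc (a := 1 - 2*L) (b := 1 + 2*L)).exists_bound_of_continuousOn
      (h1.continuous.continuousOn)
    exact ⟨M, fun x hx => by simpa using hM x hx⟩
  have hM0 : 0 ≤ M := le_trans (abs_nonneg _) (hM (1) (by constructor <;> nlinarith))
  refine ⟨M, hM0, fun η hη => ?_⟩
  -- main induction over finsets
  have main : ∀ s : Finset (Fin N),
      |f (1 - ∑ k ∈ s, η k) - ∑ k ∈ s, f (1 - η k)| ≤
        M * (∑ i ∈ s, ∑ j ∈ s, if i < j then |η i| * |η j| else 0) := by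
    intro s
    induction s using Finset.cons_induction with
    | empty => simp [hf1]
    | cons a t hat ih =>
      have hcard : (t.card : ℝ) ≤ N := by exact_mod_cast (Finset.card_le_univ t).trans (by simp)
      have hsum_abs : |∑ k ∈ t, η k| ≤ L := by
        calc |∑ k ∈ t, η k| ≤ ∑ k ∈ t, |η k| := Finset.abs_sum_le_sum_abs _ _
          _ ≤ ∑ _k ∈ t, R := Finset.sum_le_sum (fun k _ => hη k)
          _ = t.card * R := by simp [mul_comm]
          _ ≤ L := by rw [hLdef]; exact mul_le_mul_of_nonneg_right hcard hR.le
      have hN2 : (2:ℝ) ≤ (N:ℝ) := by exact_mod_cast hN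
      have hηa : |η a| ≤ L := (hη a).trans (by rw [hLdef]; nlinarith)
      have hkey := keylem f hf1 L M hL hd hd2 hM (η a) (∑ k ∈ t, η k) hηa hsum_abs
      have hsplit : f (1 - ∑ k ∈ Finset.cons a t hat, η k) - ∑ k ∈ Finset.cons a t hat, f (1 - η k)
          = (f (1 - η a - ∑ k ∈ t, η k) - f (1 - η a) - f (1 - ∑ k ∈ t, η k))
            + (f (1 - ∑ k ∈ t, η k) - ∑ k ∈ t, f (1 - η k)) := by
        rw [Finset.sum_cons, Finset.sum_cons]; ring_nf
      -- cross sum identity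
      have hcross : (∑ i ∈ Finset.cons a t hat, ∑ j ∈ Finset.cons a t hat, if i < j then |η i| * |η j| else 0)
          = (∑ i ∈ t, ∑ j ∈ t, if i < j then |η i| * |η j| else 0)
            + ∑ j ∈ t, |η a| * |η j| := by
        rw [Finset.sum_cons]
        have e1 : ∀ i ∈ t, (∑ j ∈ Finset.cons a t hat, if i < j then |η i| * |η j| else 0)
            = (if i < a then |η i| * |η a| else 0) + ∑ j ∈ t, if i < j then |η i| * |η j| else 0 :=
          fun i _ => by rw [Finset.sum_cons]
        rw [Finset.sum_congr rfl e1, Finset.sum_add_distrib, Finset.sum_cons, if_neg (lt_irrefl a)]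
        have e2 : (∑ j ∈ t, if a < j then |η a| * |η j| else 0)
            + ∑ i ∈ t, (if i < a then |η i| * |η a| else 0)
            = ∑ j ∈ t, |η a| * |η j| := by
          rw [← Finset.sum_add_distrib]
          refine Finset.sum_congr rfl fun j hj => ?_
          have hja : j ≠ a := fun h => hat (h ▸ hj)
          rcases lt_trichotomy a j with h | h | h
          · rw [if_pos h, if_neg (not_lt.mpr h.le), add_zero]
          · exact absurd h.symm hja
          · rw [if_neg (not_lt.mpr h.le), if_pos h, zero_add, mul_comm]
        linarith [e2]
      have hcross_bound : |η a| * |∑ k ∈ t, η k| ≤ ∑ j ∈ t, |η a| * |η j| := by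
        rw [← Finset.mul_sum]
        exact mul_le_mul_of_nonneg_left
          ((Finset.abs_sum_le_sum_abs _ _)) (abs_nonneg _)
      calc |f (1 - ∑ k ∈ Finset.cons a t hat, η k) - ∑ k ∈ Finset.cons a t hat, f (1 - η k)|
          ≤ |f (1 - η a - ∑ k ∈ t, η k) - f (1 - η a) - f (1 - ∑ k ∈ t, η k)|
            + |f (1 - ∑ k ∈ t, η k) - ∑ k ∈ t, f (1 - η k)| := by
            rw [hsplit]; exact abs_add_le _ _
        _ ≤ M * (|η a| * |∑ k ∈ t, η k|)
            + M * (∑ i ∈ t, ∑ j ∈ t, if i < j then |η i| * |η j| else 0) := add_le_add hkey ih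
        _ ≤ M * (∑ j ∈ t, |η a| * |η j|)
            + M * (∑ i ∈ t, ∑ j ∈ t, if i < j then |η i| * |η j| else 0) := by
            gcongr
        _ = M * (∑ i ∈ Finset.cons a t hat, ∑ j ∈ Finset.cons a t hat, if i < j then |η i| * |η j| else 0) := by
            rw [hcross]; ring
  have huniv := main Finset.univ
  have hB : 0 ≤ ∑ i : Fin N, ∑ j : Fin N, if j ≠ i then |η i| ^ 2 * |η j| else 0 := by
    refine Finset.sum_nonneg fun i _ => Finset.sum_nonneg fun j _ => ?_
    split <;> positivity
  calc |f (1 - ∑ k, η k) - ∑ k, f (1 - η k)|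
      ≤ M * (∑ i : Fin N, ∑ j : Fin N, if i < j then |η i| * |η j| else 0) := huniv
    _ ≤ M * ((∑ i : Fin N, ∑ j : Fin N, if i < j then |η i| * |η j| else 0)
          + (∑ i : Fin N, ∑ j : Fin N, if j ≠ i then |η i| ^ 2 * |η j| else 0)) := by
        nlinarith
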